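/- Let H be an r×r complex Hermitian matrix and let J = {j₁ < j₂ < … < j_s} ⊆ {1, …, r}. Then Σ_{j ∈ J} λⱼ(H) equals the maximum over partial flags F₁ ⊂ F₂ ⊂ … ⊂ F_s of complex subspaces of ℂʳ with dim F_l = j_l for l = 1, …, s, of the minimum over s-dimensional complex subspaces E ⊆ ℂʳ satisfying dim(E ∩ F_l) ≥ l for all l = 1, …, s, of Tr(H_E). -/

import Mathlib

set_option linter.unusedSectionVars false

open Module Submodule Finset

namespace Wielandt

variable {Fv : Type*} [NormedAddCommGroup Fv] [InnerProductSpace ℂ Fv] [FiniteDimensional ℂ Fv]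

local notation "⟪" x ", " y "⟫" => @inner ℂ _ _ x y

lemma finrank_inf_ge (A B : Submodule ℂ Fv) :
    finrank ℂ A + finrank ℂ B ≤ finrank ℂ Fv + finrank ℂ (A ⊓ B : Submodule ℂ Fv) := by
  have h := Submodule.finrank_sup_add_finrank_inf_eq A B
  have h2 : finrank ℂ (A ⊔ B : Submodule ℂ Fv) ≤ finrank ℂ Fv := Submodule.finrank_le _
  omega

lemma helper_rank (A P : Submodule ℂ Fv) (x : Fv) :
    finrank ℂ (A ⊓ (P ⊔ span ℂ {x}) : Submodule ℂ Fv) ≤ finrank ℂ (A ⊓ P : Submodule ℂ Fv) + 1 := by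
  set U : Submodule ℂ Fv := A ⊓ (P ⊔ span ℂ {x}) with hU
  have h1 : U ⊓ P = A ⊓ P := by
    rw [hU, inf_assoc, inf_eq_right.mpr (le_sup_left : P ≤ P ⊔ span ℂ {x})]
  have h2 := Submodule.finrank_sup_add_finrank_inf_eq U P
  rw [h1] at h2
  have h3 : U ⊔ P ≤ P ⊔ span ℂ {x} := sup_le inf_le_right le_sup_left
  have h4 : finrank ℂ (U ⊔ P : Submodule ℂ Fv) ≤ finrank ℂ (P ⊔ span ℂ {x} : Submodule ℂ Fv) :=
    Submodule.finrank_mono h3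
  have h5 := Submodule.finrank_sup_add_finrank_inf_eq P (span ℂ {x})
  have h6 : finrank ℂ (span ℂ {x} : Submodule ℂ Fv) ≤ 1 := by
    by_cases hx : x = 0
    · subst hx
      rw [Submodule.span_zero_singleton, finrank_bot]
      omega
    · rw [show span ℂ {x} = (ℂ ∙ x) from rfl, finrank_span_singleton hx]
  omega

lemma finrank_span_image {ι : Type*} {w : ι → Fv} (hw : LinearIndependent ℂ w) (U : Finset ι) :
    finrank ℂ (span ℂ (w '' ↑U) : Submodule ℂ Fv) = U.card := by
  have h1 : w '' ↑U = Set.range (fun u : ↥(↑U : Set ι) => w u) := Set.image_eq_range _ _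
  rw [h1, show (fun u : ↥(↑U : Set ι) => w ↑u) = w ∘ Subtype.val from rfl,
    finrank_span_eq_card (hw.comp Subtype.val Subtype.val_injective)]
  simp

lemma exists_unit_mem_compl (C P : Submodule ℂ Fv) (h : finrank ℂ P < finrank ℂ C) :
    ∃ x : Fv, x ∈ C ∧ ‖x‖ = 1 ∧ x ∈ Pᗮ := by
  have h1 := finrank_inf_ge C Pᗮ
  have h2 : finrank ℂ P + finrank ℂ Pᗮ = finrank ℂ Fv :=
    Submodule.finrank_add_finrank_orthogonal P
  have h3 : 0 < finrank ℂ (C ⊓ Pᗮ : Submodule ℂ Fv) := by omega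
  have h4 : (C ⊓ Pᗮ : Submodule ℂ Fv) ≠ ⊥ := by
    intro hbot
    rw [hbot, finrank_bot] at h3
    omega
  obtain ⟨x, hx, hx0⟩ := Submodule.exists_mem_ne_zero_of_ne_bot h4
  refine ⟨‖x‖⁻¹ • x, C.smul_mem _ hx.1, norm_smul_inv_norm hx0, Pᗮ.smul_mem _ hx.2⟩

lemma orthonormal_snoc {t : ℕ} {u : Fin t → Fv} (hu : Orthonormal ℂ u) {x : Fv}
    (hx : ‖x‖ = 1) (ho : ∀ p, ⟪u p, x⟫ = 0) :
    Orthonormal ℂ (Fin.snoc u x : Fin (t + 1) → Fv) := by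
  rw [orthonormal_iff_ite] at hu ⊢
  intro i j
  refine Fin.lastCases ?_ ?_ i <;> clear i
  · refine Fin.lastCases ?_ ?_ j <;> clear j
    · simp [inner_self_eq_norm_sq_to_K, hx]
    · intro j
      have : ⟪x, u j⟫ = 0 := by
        rw [← inner_conj_symm, ho j, map_zero]
      simp [this, (Fin.castSucc_lt_last j).ne']
  · intro i
    refine Fin.lastCases ?_ ?_ j <;> clear j
    · simp [ho i, (Fin.castSucc_lt_last i).ne]
    · intro j
      simpa [Fin.castSucc_inj] using hu i j

lemma onb_chain {s : ℕ} (C : Fin s → Submodule ℂ Fv) (hC : Monotone C)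
    (hdim : ∀ l : Fin s, (l : ℕ) + 1 ≤ finrank ℂ (C l)) :
    ∃ u : Fin s → Fv, Orthonormal ℂ u ∧ ∀ l, u l ∈ C l := by
  suffices h : ∀ t : ℕ, t ≤ s → ∃ u : Fin t → Fv, Orthonormal ℂ u ∧
      ∀ p : Fin t, ∀ hp : (p : ℕ) < s, u p ∈ C ⟨p, hp⟩ by
    obtain ⟨u, hu, hmem⟩ := h s le_rfl
    exact ⟨u, hu, fun l => by simpa using hmem l l.2⟩
  intro t
  induction t with
  | zero =>
    intro _
    refine ⟨Fin.elim0, ?_, fun p => p.elim0⟩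
    rw [orthonormal_iff_ite]
    exact fun i => i.elim0
  | succ k ih =>
    intro hk
    obtain ⟨u, hu, hmem⟩ := ih (by omega)
    have hks : k < s := hk
    have hdimk : k + 1 ≤ finrank ℂ (C ⟨k, hks⟩) := by simpa using hdim ⟨k, hks⟩
    have hrank : finrank ℂ (span ℂ (Set.range u) : Submodule ℂ Fv) < finrank ℂ (C ⟨k, hks⟩) := by
      have := finrank_span_eq_card hu.linearIndependent
      rw [this]
      simpa using hdimk
    obtain ⟨x, hxC, hx1, hxo⟩ := exists_unit_mem_compl (C ⟨k, hks⟩) _ hrank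
    have ho : ∀ p, ⟪u p, x⟫ = 0 := fun p =>
      (Submodule.mem_orthogonal _ x).1 hxo (u p) (Submodule.subset_span ⟨p, rfl⟩)
    refine ⟨Fin.snoc u x, orthonormal_snoc hu hx1 ho, ?_⟩
    intro p
    refine Fin.lastCases (motive := fun q => ∀ hq : (q : ℕ) < s, (Fin.snoc u x : Fin (k+1) → Fv) q ∈ C ⟨q, hq⟩)
      ?_ ?_ p
    · intro hq
      simpa using hxC
    · intro i hq
      have hi : (i : ℕ) < s := by simpa using hq
      have := hmem i hi
      simpa [Fin.snoc_castSucc] using this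

lemma trace_compression (E : Submodule ℂ Fv) {n : ℕ} (b : OrthonormalBasis (Fin n) ℂ E)
    (T : Fv →ₗ[ℂ] Fv) :
    LinearMap.trace ℂ E ((orthogonalProjection E).toLinearMap ∘ₗ T ∘ₗ E.subtype) =
      ∑ i, ⟪(b i : Fv), T (b i)⟫ := by
  rw [LinearMap.trace_eq_matrix_trace ℂ b.toBasis, Matrix.trace]
  congr 1
  funext i
  rw [Matrix.diag]
  rw [LinearMap.toMatrix_apply]
  rw [b.coe_toBasis_repr_apply, b.repr_apply_apply, b.coe_toBasis]
  simp only [LinearMap.comp_apply, ContinuousLinearMap.coe_coe, Submodule.coe_subtype]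
  exact inner_orthogonalProjection_eq_of_mem_left (b i) (T (b i))

lemma range_snoc' {t : ℕ} (y : Fin t → Fv) (x : Fv) :
    Set.range (Fin.snoc y x : Fin (t + 1) → Fv) = Set.range y ∪ {x} := by
  ext z
  constructor
  · rintro ⟨u, rfl⟩
    refine Fin.lastCases ?_ ?_ u
    · right; simp
    · intro i; left; exact ⟨i, by simp⟩
  · rintro (⟨u, rfl⟩ | rfl)
    · exact ⟨u.castSucc, by simp⟩
    · exact ⟨Fin.last t, by simp⟩

lemma greedy (s : ℕ) (A B : ℕ → Submodule ℂ Fv) (hA : Monotone A) (hB : Monotone B)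
    (hdimB : ∀ t < s, t + 1 ≤ finrank ℂ (B t))
    (hdimAB : ∀ l < s, ∀ t < s, l + t + 2 - s ≤ finrank ℂ (A l ⊓ B t : Submodule ℂ Fv)) :
    ∃ y : Fin s → Fv, LinearIndependent ℂ y ∧ (∀ u : Fin s, y u ∈ B (u : ℕ)) ∧
      ∀ l, l < s → l + 1 ≤ finrank ℂ (A l ⊓ span ℂ (Set.range y) : Submodule ℂ Fv) := by
  classical
  suffices h : ∀ t, t ≤ s → ∃ y : Fin t → Fv, LinearIndependent ℂ y ∧
      (∀ u : Fin t, y u ∈ B (u : ℕ)) ∧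
      (∀ l < s, finrank ℂ (A l ⊓ span ℂ (Set.range y) : Submodule ℂ Fv) ≤
        (univ.filter fun u => y u ∈ A l).card) ∧
      (∀ l < s, l + 1 + t - s ≤ (univ.filter fun u => y u ∈ A l).card) by
    obtain ⟨y, h1, h2, h3, h4⟩ := h s le_rfl
    refine ⟨y, h1, h2, fun l hl => ?_⟩
    have hcard := h4 l hl
    have hspan : span ℂ (y '' ↑(univ.filter fun u => y u ∈ A l)) ≤
        A l ⊓ span ℂ (Set.range y) := by
      rw [Submodule.span_le]
      rintro z ⟨u, hu, rfl⟩
      have hu' : y u ∈ A l := (Finset.mem_filter.1 hu).2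
      exact ⟨hu', Submodule.subset_span ⟨u, rfl⟩⟩
    have hmono := Submodule.finrank_mono hspan
    rw [finrank_span_image h1 (univ.filter fun u => y u ∈ A l)] at hmono
    omega
  intro t
  induction t with
  | zero =>
    intro _
    refine ⟨Fin.elim0, linearIndependent_empty_type, fun u => u.elim0, fun l _ => ?_,
      fun l hl => ?_⟩
    · simp [Set.range_eq_empty]
    · omega
  | succ t ih =>
    intro hts
    have hts' : t < s := hts
    obtain ⟨y, h1, h2, h3, h4⟩ := ih (le_of_lt hts')
    set P : Submodule ℂ Fv := span ℂ (Set.range y) with hP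
    have hPrank : finrank ℂ P = t := by
      rw [hP, finrank_span_eq_card h1, Fintype.card_fin]
    have hPB : P ≤ B t := by
      rw [hP, Submodule.span_le]
      rintro z ⟨u, rfl⟩
      exact hB (by omega : (u : ℕ) ≤ t) (h2 u)
    obtain ⟨lstar, x, hxB, hxP, hxA, hmin, htrig⟩ :
        ∃ (lstar : ℕ) (x : Fv), x ∈ B t ∧ x ∉ P ∧
          (∀ l, lstar ≤ l → l < s → x ∈ A l) ∧
          (∀ l, l < lstar → l < s → A l ⊓ B t ≤ P) ∧
          (∀ l, l < s →
            (univ.filter fun u => y u ∈ A l).card < finrank ℂ (A l ⊓ B t : Submodule ℂ Fv) →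
            lstar ≤ l) := by
      have hkey : ∀ l, l < s → A l ⊓ B t ≤ P →
          finrank ℂ (A l ⊓ B t : Submodule ℂ Fv) ≤ (univ.filter fun u => y u ∈ A l).card := by
        intro l hl hle
        have h5 : A l ⊓ B t ≤ A l ⊓ P := le_inf inf_le_left hle
        exact le_trans (Submodule.finrank_mono h5) (h3 l hl)
      by_cases hS : ∃ l, l < s ∧ ¬ (A l ⊓ B t ≤ P)
      · set L : Set ℕ := {l | l < s ∧ ¬ (A l ⊓ B t ≤ P)} with hL
        have hLne : L.Nonempty := hS
        have hmem := Nat.sInf_mem hLne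
        obtain ⟨hlt, hnle⟩ := hmem
        obtain ⟨x, hx1, hx2⟩ := SetLike.not_le_iff_exists.1 hnle
        refine ⟨sInf L, x, hx1.2, hx2, ?_, ?_, ?_⟩
        · intro l hge hls
          exact hA hge hx1.1
        · intro l hllt hls
          by_contra hcon
          exact (Nat.notMem_of_lt_sInf hllt) ⟨hls, hcon⟩
        · intro l hls hcnt
          refine Nat.sInf_le ⟨hls, fun hle => ?_⟩
          have := hkey l hls hle
          omega
      · push_neg at hS
        have hnle : ¬ (B t ≤ P) := by
          intro hle
          have := Submodule.finrank_mono hle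
          have := hdimB t hts'
          omega
        obtain ⟨x, hx1, hx2⟩ := SetLike.not_le_iff_exists.1 hnle
        refine ⟨s, x, hx1, hx2, ?_, ?_, ?_⟩
        · intro l hge hls
          omega
        · intro l _ hls
          exact hS l hls
        · intro l hls hcnt
          have := hkey l hls (hS l hls)
          omega
    have hcount : ∀ l, (univ.filter fun u : Fin (t+1) =>
          (Fin.snoc y x : Fin (t+1) → Fv) u ∈ A l).card =
        (univ.filter fun u : Fin t => y u ∈ A l).card + (if x ∈ A l then 1 else 0) := by
      intro l
      rw [Finset.card_filter, Finset.card_filter, Fin.sum_univ_castSucc]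
      simp
    have hrange := range_snoc' y x
    have hspan' : span ℂ (Set.range (Fin.snoc y x : Fin (t+1) → Fv)) = P ⊔ span ℂ {x} := by
      rw [hrange, Submodule.span_union, hP]
    have hsub : P ⊔ span ℂ {x} ≤ B t := by
      refine sup_le hPB ?_
      rw [Submodule.span_le]
      rintro z rfl
      exact hxB
    refine ⟨Fin.snoc y x, ?_, ?_, ?_, ?_⟩
    · rw [linearIndependent_fin_snoc]
      exact ⟨h1, hxP⟩
    · intro u
      refine Fin.lastCases ?_ ?_ u
      · simpa using hxB
      · intro i
        simpa using h2 i
    · intro l hl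
      rw [hcount l, hspan']
      by_cases hll : l < lstar
      · have hkey2 : A l ⊓ (P ⊔ span ℂ {x}) ≤ A l ⊓ P := by
          rintro z ⟨hzA, hzPx⟩
          exact ⟨hzA, hmin l hll hl ⟨hzA, hsub hzPx⟩⟩
        have := le_trans (Submodule.finrank_mono hkey2) (h3 l hl)
        split <;> omega
      · push_neg at hll
        rw [if_pos (hxA l hll hl)]
        have := helper_rank (A l) P x
        have := h3 l hl
        omega
    · intro l hl
      rw [hcount l]
      have hc := h4 l hl
      by_cases hcase : s ≤ l + t + 1
      · by_cases hge : l + 1 + (t + 1) - s ≤ (univ.filter fun u : Fin t => y u ∈ A l).card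
        · split <;> omega
        · have hd := hdimAB l hl t hts'
          have hlt2 : (univ.filter fun u : Fin t => y u ∈ A l).card <
              finrank ℂ (A l ⊓ B t : Submodule ℂ Fv) := by omega
          have hls := htrig l hl hlt2
          rw [if_pos (hxA l hls hl)]
          omega
      · split <;> omega


variable {n : ℕ} (v : OrthonormalBasis (Fin n) ℂ Fv)

lemma repr_zero_of_not_mem (Aset : Set (Fin n)) {x : Fv}
    (hx : x ∈ span ℂ (v '' Aset)) {i : Fin n} (hi : i ∉ Aset) : ⟪v i, x⟫ = (0 : ℂ) := by
  induction hx using Submodule.span_induction with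
  | mem y hy =>
    obtain ⟨a, ha, rfl⟩ := hy
    exact v.orthonormal.2 (fun he => hi (he ▸ ha))
  | zero => simp
  | add y z _ _ hy hz => rw [inner_add_right, hy, hz, add_zero]
  | smul c y _ hy => rw [inner_smul_right, hy, mul_zero]

lemma inner_map_expand (T : Fv →ₗ[ℂ] Fv) (μ : Fin n → ℝ)
    (hT : ∀ i, T (v i) = (μ i : ℂ) • v i) (x : Fv) :
    (⟪x, T x⟫).re = ∑ i, μ i * Complex.normSq ⟪v i, x⟫ := by
  have h1 : T x = ∑ i, (v.repr x i * μ i) • v i := by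
    conv_lhs => rw [← v.sum_repr x]
    rw [map_sum]
    refine Finset.sum_congr rfl fun i _ => ?_
    rw [map_smul, hT i, smul_smul]
  have h2 : ⟪x, T x⟫ = ∑ i, (v.repr x i * μ i) * ⟪x, v i⟫ := by
    rw [h1, inner_sum]
    exact Finset.sum_congr rfl fun i _ => inner_smul_right _ _ _
  rw [h2, Complex.re_sum]
  refine Finset.sum_congr rfl fun i _ => ?_
  have h3 : ⟪x, v i⟫ = (starRingEnd ℂ) ⟪v i, x⟫ := (inner_conj_symm _ _).symm
  rw [h3, v.repr_apply_apply]
  have h4 : ⟪v i, x⟫ * (μ i : ℂ) * (starRingEnd ℂ) ⟪v i, x⟫ =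
      ((μ i * Complex.normSq ⟪v i, x⟫ : ℝ) : ℂ) := by
    push_cast
    rw [← Complex.mul_conj ⟪v i, x⟫]
    ring
  rw [h4, Complex.ofReal_re]

lemma norm_sq_expand (x : Fv) : ‖x‖ ^ 2 = ∑ i, Complex.normSq ⟪v i, x⟫ := by
  have h2 : ⟪x, x⟫ = ∑ i, v.repr x i * ⟪x, v i⟫ := by
    conv_lhs => rw [show ⟪x, x⟫ = ⟪x, ∑ i, v.repr x i • v i⟫ from by rw [v.sum_repr x]]
    rw [inner_sum]
    exact Finset.sum_congr rfl fun i _ => inner_smul_right _ _ _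
  have h3 : (⟪x, x⟫).re = ‖x‖ ^ 2 := by
    rw [← inner_self_eq_norm_sq (𝕜 := ℂ) x]
    rfl
  rw [h2, Complex.re_sum] at h3
  rw [← h3]
  refine Finset.sum_congr rfl fun i _ => ?_
  rw [v.repr_apply_apply, show ⟪x, v i⟫ = (starRingEnd ℂ) ⟪v i, x⟫ from (inner_conj_symm _ _).symm,
    Complex.mul_conj, Complex.ofReal_re]

lemma rayleigh_le (T : Fv →ₗ[ℂ] Fv) (μ : Fin n → ℝ)
    (hT : ∀ i, T (v i) = (μ i : ℂ) • v i) (Aset : Set (Fin n)) (c : ℝ)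
    (hb : ∀ i ∈ Aset, μ i ≤ c) {x : Fv} (hx : x ∈ span ℂ (v '' Aset)) (hn : ‖x‖ = 1) :
    (⟪x, T x⟫).re ≤ c := by
  rw [inner_map_expand v T μ hT x]
  have hsum : ∑ i, Complex.normSq ⟪v i, x⟫ = 1 := by
    rw [← norm_sq_expand v x, hn, one_pow]
  calc ∑ i, μ i * Complex.normSq ⟪v i, x⟫ ≤ ∑ i, c * Complex.normSq ⟪v i, x⟫ := by
        refine Finset.sum_le_sum fun i _ => ?_
        by_cases hi : i ∈ Aset
        · exact mul_le_mul_of_nonneg_right (hb i hi) (Complex.normSq_nonneg _)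
        · rw [repr_zero_of_not_mem v Aset hx hi]
          simp
    _ = c := by rw [← Finset.mul_sum, hsum, mul_one]

lemma rayleigh_ge (T : Fv →ₗ[ℂ] Fv) (μ : Fin n → ℝ)
    (hT : ∀ i, T (v i) = (μ i : ℂ) • v i) (Aset : Set (Fin n)) (c : ℝ)
    (hb : ∀ i ∈ Aset, c ≤ μ i) {x : Fv} (hx : x ∈ span ℂ (v '' Aset)) (hn : ‖x‖ = 1) :
    c ≤ (⟪x, T x⟫).re := by
  rw [inner_map_expand v T μ hT x]
  have hsum : ∑ i, Complex.normSq ⟪v i, x⟫ = 1 := by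
    rw [← norm_sq_expand v x, hn, one_pow]
  calc c = ∑ i, c * Complex.normSq ⟪v i, x⟫ := by rw [← Finset.mul_sum, hsum, mul_one]
    _ ≤ ∑ i, μ i * Complex.normSq ⟪v i, x⟫ := by
        refine Finset.sum_le_sum fun i _ => ?_
        by_cases hi : i ∈ Aset
        · exact mul_le_mul_of_nonneg_right (hb i hi) (Complex.normSq_nonneg _)
        · rw [repr_zero_of_not_mem v Aset hx hi]
          simp

lemma trace_eq_sum (E : Submodule ℂ Fv) {n : ℕ} (hE : finrank ℂ E = n) (u : Fin n → Fv)
    (hu : Orthonormal ℂ u) (hmem : ∀ p, u p ∈ E) (T : Fv →ₗ[ℂ] Fv) :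
    LinearMap.trace ℂ E ((orthogonalProjection E).toLinearMap ∘ₗ T ∘ₗ E.subtype) =
      ∑ p, ⟪u p, T (u p)⟫ := by
  let u' : Fin n → E := fun p => ⟨u p, hmem p⟩
  have hu' : Orthonormal ℂ u' := by
    rw [orthonormal_iff_ite] at hu ⊢
    intro i j'
    exact hu i j'
  have hsp : ⊤ ≤ span ℂ (Set.range u') := by
    have hfr : finrank ℂ (span ℂ (Set.range u') : Submodule ℂ E) = n := by
      rw [finrank_span_eq_card hu'.linearIndependent, Fintype.card_fin]
    rw [Submodule.eq_top_of_finrank_eq (by rw [hfr, hE] : finrank ℂ (span ℂ (Set.range u') : Submodule ℂ E) = finrank ℂ E)]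
  let b : OrthonormalBasis (Fin n) ℂ E := OrthonormalBasis.mk hu' hsp
  rw [trace_compression E b T]
  refine Finset.sum_congr rfl fun p _ => ?_
  have hb : b p = u' p := by
    simp [b, OrthonormalBasis.coe_mk]
  rw [hb]

lemma fin_gap {s r : ℕ} {j : Fin s → Fin r} (hj : StrictMono j) :
    ∀ (d : ℕ) (a b : Fin s), (b : ℕ) = (a : ℕ) + d → (j a : ℕ) + d ≤ (j b : ℕ) := by
  intro d
  induction d with
  | zero =>
    intro a b h
    have : b = a := Fin.ext (by omega)
    rw [this]
    omega
  | succ d ih =>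
    intro a b h
    have hb' : (a : ℕ) + d < s := by
      have := b.2
      omega
    have h1 := ih a ⟨(a : ℕ) + d, hb'⟩ rfl
    have h2 : (⟨(a : ℕ) + d, hb'⟩ : Fin s) < b := by
      rw [Fin.lt_def]
      simp
      omega
    have h3 := hj h2
    rw [Fin.lt_def] at h3
    omega

end Wielandt



/-- The trace of the compression `H_E : E → E` of a complex matrix `H` to a
subspace `E ⊆ ℂʳ` (orthogonal projection composed with restriction); for
Hermitian `H` this is real, and we take the real part. -/
noncomputable def compressionTrace (r : ℕ) (H : Matrix (Fin r) (Fin r) ℂ)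
    (E : Submodule ℂ (EuclideanSpace ℂ (Fin r))) : ℝ :=
  (LinearMap.trace ℂ E
    (E.orthogonalProjectionOnto.toLinearMap ∘ₗ Matrix.toEuclideanLin H ∘ₗ E.subtype)).re

set_option maxHeartbeats 1000000 in
/-- For a Hermitian `r × r` matrix `H` with eigenvalues `μ 0 ≥ … ≥ μ (r-1)` in
nonincreasing order and `J = {j 0 < … < j (s-1)} ⊆ {1, …, r}`, the sum
`Σ_{l} μ (j l)` equals the maximum over partial flags `F₁ ⊂ … ⊂ F_s` with
`dim F_l = j_l` of the minimum over `s`-dimensional subspaces `E` with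
`dim (E ⊓ F_l) ≥ l` of `Tr (H_E)`. -/
theorem partial_eigenvalue_sum_max_min (r s : ℕ) (H : Matrix (Fin r) (Fin r) ℂ)
    (hH : H.IsHermitian) (μ : Fin r → ℝ) (hmono : Antitone μ)
    (hperm : ∃ σ : Equiv.Perm (Fin r), ∀ i, μ i = hH.eigenvalues (σ i))
    (j : Fin s → Fin r) (hj : StrictMono j) :
    (∃ F : Fin s → Submodule ℂ (EuclideanSpace ℂ (Fin r)),
        Monotone F ∧ (∀ l, Module.finrank ℂ (F l) = (j l : ℕ) + 1) ∧
        ∀ E : Submodule ℂ (EuclideanSpace ℂ (Fin r)),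
          Module.finrank ℂ E = s →
          (∀ l : Fin s, (l : ℕ) + 1 ≤ Module.finrank ℂ (E ⊓ F l : Submodule ℂ _)) →
          (∑ l, μ (j l)) ≤ compressionTrace r H E) ∧
    (∀ F : Fin s → Submodule ℂ (EuclideanSpace ℂ (Fin r)),
        Monotone F → (∀ l, Module.finrank ℂ (F l) = (j l : ℕ) + 1) →
        ∃ E : Submodule ℂ (EuclideanSpace ℂ (Fin r)),
          Module.finrank ℂ E = s ∧
          (∀ l : Fin s, (l : ℕ) + 1 ≤ Module.finrank ℂ (E ⊓ F l : Submodule ℂ _)) ∧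
          compressionTrace r H E ≤ ∑ l, μ (j l)) := by
  classical
  obtain ⟨σ, hσ⟩ := hperm
  set v : OrthonormalBasis (Fin r) ℂ (EuclideanSpace ℂ (Fin r)) :=
    hH.eigenvectorBasis.reindex σ.symm with hvdef
  set T : EuclideanSpace ℂ (Fin r) →ₗ[ℂ] EuclideanSpace ℂ (Fin r) :=
    Matrix.toEuclideanLin H with hTdef
  have hT : ∀ i, T (v i) = (μ i : ℂ) • v i := by
    intro i
    rw [hvdef, hTdef, OrthonormalBasis.reindex_apply]
    simp only [Equiv.symm_symm]
    have h1 := hH.mulVec_eigenvectorBasis (σ i)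
    rw [Matrix.toEuclideanLin_apply, hσ i]
    ext1 k
    have := congrFun h1 k
    rw [WithLp.ofLp_toLp, this, WithLp.ofLp_smul, Pi.smul_apply, Pi.smul_apply, Complex.real_smul, smul_eq_mul]
  have hvli := v.orthonormal.linearIndependent
  have hfr : finrank ℂ (EuclideanSpace ℂ (Fin r)) = r := by
    simp [finrank_euclideanSpace]
  constructor
  · -- part 1
    refine ⟨fun l => span ℂ (v '' ↑(Finset.Iic (j l))), ?_, ?_, ?_⟩
    · intro l l' hll'
      refine Submodule.span_mono (Set.image_mono ?_)
      intro i hi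
      simp only [Finset.coe_Iic, Set.mem_Iic] at hi ⊢
      exact le_trans hi (hj.monotone hll')
    · intro l
      rw [Wielandt.finrank_span_image hvli (Finset.Iic (j l)), Fin.card_Iic]
    · intro E hE hint
      obtain ⟨u, hu, hmem⟩ := Wielandt.onb_chain
        (fun l : Fin s => E ⊓ span ℂ (v '' ↑(Finset.Iic (j l))))
        (fun l l' hll' => inf_le_inf_left E (Submodule.span_mono (Set.image_mono
          (fun i hi => by
            simp only [Finset.coe_Iic, Set.mem_Iic] at hi ⊢
            exact le_trans hi (hj.monotone hll')))))
        (fun l => hint l)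
      have htr : compressionTrace r H E = ∑ l, (inner ℂ (u l) (T (u l)) : ℂ).re := by
        unfold compressionTrace
        rw [Wielandt.trace_eq_sum E hE u hu (fun p => (hmem p).1) T, Complex.re_sum]
      rw [htr]
      refine Finset.sum_le_sum fun l _ => ?_
      refine Wielandt.rayleigh_ge v T μ hT (↑(Finset.Iic (j l))) (μ (j l)) ?_ (hmem l).2 (hu.1 l)
      intro i hi
      refine hmono ?_
      simpa using hi
  · -- part 2
    intro F hF hFdim
    set W : Fin s → Submodule ℂ (EuclideanSpace ℂ (Fin r)) :=
      fun m => span ℂ (v '' ↑(Finset.Ici (j m))) with hWdef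
    have hWrank : ∀ m, finrank ℂ (W m) = r - (j m : ℕ) := by
      intro m
      rw [hWdef, Wielandt.finrank_span_image hvli (Finset.Ici (j m)), Fin.card_Ici]
    have hWanti : Antitone W := by
      intro m m' hmm'
      refine Submodule.span_mono (Set.image_mono ?_)
      intro i hi
      simp only [Finset.coe_Ici, Set.mem_Ici] at hi ⊢
      exact le_trans (hj.monotone hmm') hi
    have hjub : ∀ m : Fin s, (j m : ℕ) + (s - 1 - (m : ℕ)) ≤ r - 1 := by
      intro m
      have hs : 0 < s := Fin.pos m
      have h1 := Wielandt.fin_gap hj (s - 1 - (m : ℕ)) m ⟨s - 1, by omega⟩ (by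
        simp
        omega)
      have h2 := (j ⟨s - 1, by omega⟩).2
      omega
    set A : ℕ → Submodule ℂ (EuclideanSpace ℂ (Fin r)) :=
      fun l => if h : l < s then F ⟨l, h⟩ else ⊤ with hAdef
    set B : ℕ → Submodule ℂ (EuclideanSpace ℂ (Fin r)) :=
      fun t => if h : t < s then W (Fin.rev ⟨t, h⟩) else ⊤ with hBdef
    have hAmono : Monotone A := by
      intro a b hab
      simp only [hAdef]
      by_cases hb : b < s
      · rw [dif_pos (by omega : a < s), dif_pos hb]
        exact hF (by rw [Fin.le_def]; exact hab)
      · rw [dif_neg hb]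
        exact le_top
    have hBmono : Monotone B := by
      intro a b hab
      simp only [hBdef]
      by_cases hb : b < s
      · rw [dif_pos (by omega : a < s), dif_pos hb]
        refine hWanti ?_
        rw [Fin.le_def]
        simp [Fin.rev]
        omega
      · rw [dif_neg hb]
        exact le_top
    have hAeq : ∀ l (hl : l < s), A l = F ⟨l, hl⟩ := fun l hl => dif_pos hl
    have hBeq : ∀ t (ht : t < s), B t = W (Fin.rev ⟨t, ht⟩) := fun t ht => dif_pos ht
    have hrev : ∀ t (ht : t < s), (Fin.rev ⟨t, ht⟩ : Fin s) = ⟨s - 1 - t, by omega⟩ := by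
      intro t ht
      rw [Fin.ext_iff]
      simp [Fin.rev]
      omega
    have hdB : ∀ t, t < s → t + 1 ≤ finrank ℂ (B t) := by
      intro t ht
      have h1 : finrank ℂ (B t) = r - (j ⟨s - 1 - t, by omega⟩ : ℕ) := by
        rw [hBeq t ht, hrev t ht]
        exact hWrank _
      have h2 := hjub ⟨s - 1 - t, by omega⟩
      have h3 := (j ⟨s - 1 - t, by omega⟩).2
      simp at h2
      omega
    have hdAB : ∀ l, l < s → ∀ t, t < s →
        l + t + 2 - s ≤ finrank ℂ (A l ⊓ B t : Submodule ℂ (EuclideanSpace ℂ (Fin r))) := by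
      intro l hl t ht
      have hinf := Wielandt.finrank_inf_ge (A l) (B t)
      rw [hfr] at hinf
      have hFr : finrank ℂ (A l) = (j ⟨l, hl⟩ : ℕ) + 1 := by rw [hAeq l hl]; exact hFdim _
      have hWr : finrank ℂ (B t) = r - (j ⟨s - 1 - t, by omega⟩ : ℕ) := by
        rw [hBeq t ht, hrev t ht]; exact hWrank _
      by_cases hml : s - 1 - t ≤ l
      · have hgap := Wielandt.fin_gap hj (l - (s - 1 - t)) ⟨s - 1 - t, by omega⟩ ⟨l, hl⟩ (by simp; omega)
        have hjl := (j ⟨l, hl⟩).2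
        omega
      · have hjl := (j ⟨l, hl⟩).2
        omega
    obtain ⟨y, hyli, hymem, hyA⟩ := Wielandt.greedy s A B hAmono hBmono hdB hdAB
    set E : Submodule ℂ (EuclideanSpace ℂ (Fin r)) := span ℂ (Set.range y) with hEdef
    have hErank : finrank ℂ E = s := by
      rw [hEdef, finrank_span_eq_card hyli, Fintype.card_fin]
    refine ⟨E, hErank, ?_, ?_⟩
    · intro l
      have h1 := hyA (l : ℕ) l.2
      rw [hAeq (l : ℕ) l.2, Fin.eta] at h1
      rw [inf_comm] at h1
      exact h1
    · -- trace bound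
      have hDdim : ∀ t : Fin s, (t : ℕ) + 1 ≤ finrank ℂ (E ⊓ B (t : ℕ) : Submodule ℂ (EuclideanSpace ℂ (Fin r))) := by
        intro t
        have hle : (t : ℕ) + 1 ≤ s := t.2
        have hspan : span ℂ ((fun p : Fin ((t : ℕ) + 1) => y (Fin.castLE hle p)) '' ↑(univ : Finset (Fin ((t : ℕ) + 1)))) ≤
            E ⊓ B (t : ℕ) := by
          rw [Submodule.span_le]
          rintro z ⟨p, _, rfl⟩
          refine ⟨Submodule.subset_span ⟨Fin.castLE hle p, rfl⟩, ?_⟩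
          have := hymem (Fin.castLE hle p)
          exact hBmono (by simp [Fin.castLE]; omega : ((Fin.castLE hle p : Fin s) : ℕ) ≤ (t : ℕ)) this
        have hli2 : LinearIndependent ℂ (fun p : Fin ((t : ℕ) + 1) => y (Fin.castLE hle p)) :=
          hyli.comp _ (Fin.castLE_injective hle)
        have := Submodule.finrank_mono hspan
        rw [Wielandt.finrank_span_image hli2 univ] at this
        simpa using this
      obtain ⟨w, hw, hwmem⟩ := Wielandt.onb_chain (fun t : Fin s => E ⊓ B (t : ℕ))
        (fun a b hab => inf_le_inf_left E (hBmono hab)) hDdim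
      have htr : compressionTrace r H E = ∑ t, (inner ℂ (w t) (T (w t)) : ℂ).re := by
        unfold compressionTrace
        rw [Wielandt.trace_eq_sum E hErank w hw (fun p => (hwmem p).1) T, Complex.re_sum]
      rw [htr]
      have hbound : ∀ t : Fin s, (inner ℂ (w t) (T (w t)) : ℂ).re ≤ μ (j (Fin.rev t)) := by
        intro t
        have hmem2 : w t ∈ W (Fin.rev t) := by
          have h5 := (hwmem t).2
          rw [hBeq (t : ℕ) t.2, Fin.eta] at h5
          exact h5
        refine Wielandt.rayleigh_le v T μ hT (↑(Finset.Ici (j (Fin.rev t)))) (μ (j (Fin.rev t))) ?_ hmem2 (hw.1 t)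
        intro i hi
        refine hmono ?_
        simpa using hi
      calc ∑ t, (inner ℂ (w t) (T (w t)) : ℂ).re ≤ ∑ t, μ (j (Fin.rev t)) :=
            Finset.sum_le_sum fun t _ => hbound t
        _ = ∑ l, μ (j l) :=
            Fintype.sum_bijective Fin.rev Fin.rev_bijective _ _ (fun t => rfl)
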